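/- With the Manoussakis–Pelczar-Barwacz intervals Jₙ = Fₙ ∪ Gₙ (where F₁ = ∅, G₁ < F₂ < G₂ < ⋯ partition ℕ, Gₙ is a union of n successive maximal Schreier sets, and |Fₙ| = Σ_{m<n}|J_m|), define L_N = ⋃_{n∈N} Jₙ for N ⊆ ℕ. Then for infinite M, N ⊆ ℕ, every element of M \ N is at most the Gasparis–Leung index ΓL₁(L_M, L_N). -/

import Mathlib

open Finset Filter

/-- A Schreier set: a finite set of naturals whose cardinality is at most its minimum
(elements are automatically positive when nonempty). -/
def IsSchreier (F : Finset ℕ) : Prop := ∀ h : F.Nonempty, F.card ≤ F.min' h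

/-- A maximal Schreier set: nonempty with cardinality equal to its minimum. -/
def IsMaxSchreier (F : Finset ℕ) : Prop := ∃ h : F.Nonempty, F.card = F.min' h

/-- A (possibly empty) list of nonempty successive Schreier sets. -/
def SchreierChainList (C : List (Finset ℕ)) : Prop :=
  (∀ F ∈ C, IsSchreier F ∧ F.Nonempty) ∧
  C.Chain' (fun F G => ∀ a ∈ F, ∀ b ∈ G, a < b)

/-- A Schreier chain: a nonempty finite list of nonempty successive Schreier sets. -/
def IsSchreierChain (C : List (Finset ℕ)) : Prop := C ≠ [] ∧ SchreierChainList C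

def chainUnion (C : List (Finset ℕ)) : Finset ℕ := C.foldr (· ∪ ·) ∅

noncomputable def mu (p : ℝ) (x : ℕ → ℝ) (F : Finset ℕ) : ℝ :=
  (∑ n ∈ F, |x n| ^ p) ^ (1 / p)

/-- The p-th Schreier norm of a (finitely supported) sequence. -/
noncomputable def schreierNorm (p : ℝ) (x : ℕ → ℝ) : ℝ :=
  sSup {r | ∃ F : Finset ℕ, IsSchreier F ∧ F.Nonempty ∧ r = mu p x F}

noncomputable def betaNorm (p : ℝ) (x : ℕ → ℝ) (C : List (Finset ℕ)) : ℝ :=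
  ((C.map fun F => (∑ n ∈ F, |x n|) ^ p).sum) ^ (1 / p)

/-- The p-th Baernstein norm of a (finitely supported) sequence. -/
noncomputable def baernsteinNorm (p : ℝ) (x : ℕ → ℝ) : ℝ :=
  sSup {r | ∃ C : List (Finset ℕ), IsSchreierChain C ∧ r = betaNorm p x C}

/-- The Schreier covering number of a finite set. -/
noncomputable def tau1 (A : Finset ℕ) : ℕ :=
  sInf {m | ∃ C : List (Finset ℕ), SchreierChainList C ∧ C.length = m ∧ A ⊆ chainUnion C}

/-- Increasing enumeration of a set of naturals (0-indexed). -/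
noncomputable def enumSet (M : Set ℕ) : ℕ → ℕ := Nat.nth (· ∈ M)

/-- `M(J)`: the image of an index set `J` under the increasing enumeration of `M`. -/
noncomputable def subImage (M : Set ℕ) (J : Finset ℕ) : Finset ℕ := J.image (enumSet M)

/-- The Gasparis–Leung index `ΓL₁(M, N) ∈ ℕ ∪ {∞}`. -/
noncomputable def GLindex (M N : Set ℕ) : ℕ∞ :=
  ⨆ J ∈ {J : Finset ℕ | IsSchreier (subImage N J)}, (tau1 (subImage M J) : ℕ∞)

/- ### Auxiliary lemmas -/

lemma mem_chainUnion {a : ℕ} {C : List (Finset ℕ)} :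
    a ∈ chainUnion C ↔ ∃ F ∈ C, a ∈ F := by
  induction C with
  | nil => simp [chainUnion]
  | cons F C ih =>
    simp only [chainUnion, List.foldr_cons, Finset.mem_union, List.mem_cons]
    rw [show (List.foldr (· ∪ ·) ∅ C) = chainUnion C from rfl, ih]
    constructor
    · rintro (h | ⟨F', h1, h2⟩)
      · exact ⟨F, Or.inl rfl, h⟩
      · exact ⟨F', Or.inr h1, h2⟩
    · rintro ⟨F', (rfl | h1), h2⟩
      · exact Or.inl h2
      · exact Or.inr ⟨F', h1, h2⟩

lemma chain_lt_of_lt {C : List (Finset ℕ)}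
    (hne : ∀ F ∈ C, F.Nonempty)
    (hc : C.Chain' (fun F G => ∀ a ∈ F, ∀ b ∈ G, a < b))
    {i j : ℕ} (hj : j < C.length) (hij : i < j) :
    ∀ a ∈ C.get ⟨i, lt_trans hij hj⟩, ∀ b ∈ C.get ⟨j, hj⟩, a < b := by
  induction j with
  | zero => omega
  | succ j ihj =>
    have hjl : j < C.length := by omega
    have hrel : ∀ a ∈ C.get ⟨j, hjl⟩, ∀ b ∈ C.get ⟨j+1, hj⟩, a < b :=
      List.isChain_iff_getElem.mp hc j (by omega)
    rcases Nat.lt_or_ge i j with h | h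
    · intro a ha b hb
      obtain ⟨c, hcmem⟩ := hne _ (C.get_mem ⟨j, hjl⟩)
      exact lt_trans (ihj hjl h a ha c hcmem) (hrel c hcmem b hb)
    · have : i = j := by omega
      subst this; exact hrel

lemma le_tau1_of_maxSchreier {m : ℕ} {Gm : Finset ℕ} {H : Fin m → Finset ℕ}
    (hmax : ∀ i, IsMaxSchreier (H i))
    (hord : ∀ i j : Fin m, i < j → ∀ a ∈ H i, ∀ b ∈ H j, a < b)
    (hG : Gm = Finset.univ.biUnion H) : m ≤ tau1 Gm := by
  have hHne : ∀ i, (H i).Nonempty := fun i => (hmax i).1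
  apply le_csInf
  · refine ⟨m, List.ofFn H, ⟨?_, ?_⟩, List.length_ofFn, ?_⟩
    · intro F hF
      obtain ⟨i, rfl⟩ := List.mem_ofFn.mp hF
      exact ⟨fun h => ((hmax i).2 ▸ le_refl _ : (H i).card ≤ (H i).min' h), hHne i⟩
    · show List.IsChain _ _
      rw [List.isChain_iff_getElem]
      intro i hi
      simp only [List.getElem_ofFn]
      apply hord
      simp [Fin.lt_def]
    · intro x hx
      rw [hG, Finset.mem_biUnion] at hx
      obtain ⟨i, _, hxi⟩ := hx
      exact mem_chainUnion.mpr ⟨H i, List.mem_ofFn.mpr ⟨i, rfl⟩, hxi⟩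
  · rintro k ⟨C, ⟨hmem, hch⟩, rfl, hcover⟩
    have hne : ∀ F ∈ C, F.Nonempty := fun F hF => (hmem F hF).2
    have hex : ∀ i : Fin m, ∃ j : Fin C.length, (H i).max' (hHne i) ∈ C.get j := by
      intro i
      have : (H i).max' (hHne i) ∈ Gm := by
        rw [hG, Finset.mem_biUnion]
        exact ⟨i, Finset.mem_univ i, Finset.max'_mem _ _⟩
      obtain ⟨Fc, hFc, hmemF⟩ := mem_chainUnion.mp (hcover this)
      obtain ⟨j, hj⟩ := List.mem_iff_get.mp hFc
      exact ⟨j, hj ▸ hmemF⟩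
    choose φ hφ using hex
    have hinj : Function.Injective φ := by
      have key : ∀ i i' : Fin m, i < i' → φ i = φ i' → False := by
        intro i i' hii' heq
        set j := φ i' with hj
        have hsub : ∀ x ∈ H i', x ∈ C.get j := by
          intro x hx
          have hxG : x ∈ Gm := by
            rw [hG, Finset.mem_biUnion]; exact ⟨i', Finset.mem_univ _, hx⟩
          obtain ⟨Fc, hFc, hmemF⟩ := mem_chainUnion.mp (hcover hxG)
          obtain ⟨j', hj'⟩ := List.mem_iff_get.mp hFc
          subst hj'
          rcases lt_trichotomy (j' : ℕ) (j : ℕ) with h | h | h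
          · have h1 : x < (H i).max' (hHne i) := by
              have := chain_lt_of_lt hne hch j.isLt h
              have hmi : (H i).max' (hHne i) ∈ C.get j := heq ▸ hφ i
              exact this x (by convert hmemF) _ hmi
            have h2 : (H i).max' (hHne i) < x :=
              hord i i' hii' _ (Finset.max'_mem _ _) x hx
            omega
          · have : j' = j := Fin.ext h
            subst this; exact hmemF
          · have h1 : (H i').max' (hHne i') < x := by
              have := chain_lt_of_lt hne hch j'.isLt h
              exact this _ (by convert hφ i') x hmemF
            have h2 : x ≤ (H i').max' (hHne i') := Finset.le_max' _ _ hx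
            omega
        have hmi : (H i).max' (hHne i) ∈ C.get j := heq ▸ hφ i
        have hlt : (H i).max' (hHne i) < (H i').min' (hHne i') :=
          hord i i' hii' _ (Finset.max'_mem _ _) _ (Finset.min'_mem _ _)
        have hnotmem : (H i).max' (hHne i) ∉ H i' := by
          intro hc'
          exact absurd (Finset.min'_le _ _ hc') (by omega)
        have hsub2 : insert ((H i).max' (hHne i)) (H i') ⊆ C.get j := by
          intro x hx
          rcases Finset.mem_insert.mp hx with rfl | hx
          · exact hmi
          · exact hsub x hx
        have hcard : (H i').card + 1 ≤ (C.get j).card := by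
          have := Finset.card_le_card hsub2
          rwa [Finset.card_insert_of_notMem hnotmem] at this
        have hgne : (C.get j).Nonempty := hne _ (C.get_mem j)
        have hS : (C.get j).card ≤ (C.get j).min' hgne := (hmem _ (C.get_mem j)).1 hgne
        have hminle : (C.get j).min' hgne ≤ (H i).max' (hHne i) := Finset.min'_le _ _ hmi
        have hcardH : (H i').card = (H i').min' (hHne i') := (hmax i').2
        omega
      intro i i' heq
      rcases lt_trichotomy i i' with h | h | h
      · exact absurd heq (fun he => key i i' h he)
      · exact h
      · exact absurd heq.symm (fun he => key i' i h he)
    calc m = Fintype.card (Fin m) := (Fintype.card_fin m).symm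
    _ ≤ Fintype.card (Fin C.length) := Fintype.card_le_of_injective φ hinj
    _ = C.length := Fintype.card_fin _

/-- With the MPB intervals Jₙ = Fₙ ∪ Gₙ and L_N = ⋃_{n∈N} Jₙ, every element of M \ N
is at most ΓL₁(L_M, L_N). -/
theorem mpb_diff_le_GLindex (F G : ℕ → Finset ℕ) (hF1 : F 1 = ∅)
    (hInt : ∀ n, 1 ≤ n → (∃ a b, F n = Finset.Icc a b) ∧ ∃ a b, G n = Finset.Icc a b)
    (hGmax : ∀ n, 1 ≤ n → ∃ H : Fin n → Finset ℕ, (∀ i, IsMaxSchreier (H i)) ∧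
      (∀ i j : Fin n, i < j → ∀ a ∈ H i, ∀ b ∈ H j, a < b) ∧
      G n = Finset.univ.biUnion H)
    (hFG : ∀ n, 1 ≤ n → ∀ a ∈ F n, ∀ b ∈ G n, a < b)
    (hGF : ∀ n, 1 ≤ n → ∀ a ∈ G n, ∀ b ∈ F (n + 1), a < b)
    (hpos : ∀ n, 1 ≤ n → ∀ a ∈ F n ∪ G n, 1 ≤ a)
    (hcover : ∀ m : ℕ, 1 ≤ m → ∃ n, 1 ≤ n ∧ m ∈ F n ∪ G n)
    (hcard : ∀ n, 2 ≤ n → (F n).card = ∑ m ∈ Finset.Ico 1 n, ((F m).card + (G m).card))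
    (M N : Set ℕ) (hM : M.Infinite) (hN : N.Infinite)
    (hM1 : ∀ m ∈ M, 1 ≤ m) (hN1 : ∀ n ∈ N, 1 ≤ n) :
    ∀ m ∈ M \ N, (m : ℕ∞) ≤
      GLindex (⋃ n ∈ M, ↑(F n ∪ G n)) (⋃ n ∈ N, ↑(F n ∪ G n)) := by
  classical
  intro m hm
  obtain ⟨hmM, hmN⟩ := hm
  have hm1 : 1 ≤ m := hM1 m hmM
  set LM : Set ℕ := ⋃ n ∈ M, ↑(F n ∪ G n) with hLMdef
  set LN : Set ℕ := ⋃ n ∈ N, ↑(F n ∪ G n) with hLNdef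
  have hmemLM : ∀ y, y ∈ LM ↔ ∃ n ∈ M, y ∈ F n ∪ G n := by
    intro y; simp [hLMdef]
  have hmemLN : ∀ y, y ∈ LN ↔ ∃ n ∈ N, y ∈ F n ∪ G n := by
    intro y; simp [hLNdef]
  -- G n is nonempty for n ≥ 1
  have hGne : ∀ n, 1 ≤ n → (G n).Nonempty := by
    intro n hn
    obtain ⟨H, hmax, _, hG⟩ := hGmax n hn
    obtain ⟨x, hx⟩ := (hmax ⟨0, hn⟩).1
    exact ⟨x, by rw [hG]; exact Finset.mem_biUnion.mpr ⟨⟨0, hn⟩, Finset.mem_univ _, hx⟩⟩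
  -- F n is nonempty for n ≥ 2
  have hFne : ∀ n, 2 ≤ n → (F n).Nonempty := by
    intro n hn
    rw [← Finset.card_pos, hcard n hn]
    have h1 : (1 : ℕ) ∈ Finset.Ico 1 n := Finset.mem_Ico.mpr ⟨le_refl 1, by omega⟩
    have h2 : 0 < (G 1).card := Finset.card_pos.mpr (hGne 1 le_rfl)
    have h3 := Finset.single_le_sum (f := fun k => (F k).card + (G k).card)
      (fun i _ => Nat.zero_le _) h1
    omega
  -- successive blocks are ordered
  have hJsucc : ∀ n, 1 ≤ n → ∀ a ∈ F n ∪ G n, ∀ b ∈ F (n+1) ∪ G (n+1), a < b := by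
    intro n hn a ha b hb
    obtain ⟨gg, hgg⟩ := hGne n hn
    obtain ⟨f2, hf2⟩ := hFne (n+1) (by omega)
    have key1 : ∀ c ∈ G n, c < b := by
      intro c hc
      rcases Finset.mem_union.mp hb with h' | h'
      · exact hGF n hn c hc b h'
      · exact lt_trans (hGF n hn c hc f2 hf2) (hFG (n+1) (by omega) f2 hf2 b h')
    rcases Finset.mem_union.mp ha with h' | h'
    · exact lt_trans (hFG n hn a h' gg hgg) (key1 gg hgg)
    · exact key1 a h'
  have hJlt : ∀ n n', 1 ≤ n → n < n' → ∀ a ∈ F n ∪ G n, ∀ b ∈ F n' ∪ G n', a < b := by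
    intro n n' hn
    induction n' with
    | zero => omega
    | succ n' ih =>
      intro hnn'
      rcases Nat.lt_or_ge n n' with h | h
      · intro a ha b hb
        obtain ⟨gg, hgg⟩ := hGne n' (by omega)
        exact lt_trans (ih h a ha gg (Finset.mem_union_right _ hgg))
          (hJsucc n' (by omega) gg (Finset.mem_union_right _ hgg) b hb)
      · have heqn : n' = n := by omega
        subst heqn
        exact hJsucc n' hn
  -- blocks contain large elements
  have hbig : ∀ n, 1 ≤ n → ∃ y ∈ G n, n ≤ y := by
    intro n
    induction n with
    | zero => intro h; omega
    | succ n ih =>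
      intro _
      rcases Nat.lt_or_ge n 1 with h | h
      · obtain ⟨y, hy⟩ := hGne 1 le_rfl
        have : n = 0 := by omega
        subst this
        exact ⟨y, hy, hpos 1 le_rfl y (Finset.mem_union_right _ hy)⟩
      · obtain ⟨y, hy, hny⟩ := ih h
        obtain ⟨y', hy'⟩ := hGne (n+1) (by omega)
        have := hJsucc n h y (Finset.mem_union_right _ hy) y' (Finset.mem_union_right _ hy')
        exact ⟨y', hy', by omega⟩
  -- the union sets are infinite
  have hinfU : ∀ (P : Set ℕ), P.Infinite → (∀ p ∈ P, 1 ≤ p) →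
      {x | x ∈ ⋃ n ∈ P, (↑(F n ∪ G n) : Set ℕ)}.Infinite := by
    intro P hP hP1
    rw [Set.setOf_mem_eq]
    apply Set.infinite_of_forall_exists_gt
    intro B
    obtain ⟨n, hnP, hnB⟩ := hP.exists_gt B
    obtain ⟨y, hy, hny⟩ := hbig n (hP1 n hnP)
    refine ⟨y, ?_, by omega⟩
    exact Set.mem_biUnion hnP (by exact_mod_cast Finset.mem_union_right _ hy)
  have hLMinf : {x | x ∈ LM}.Infinite := hinfU M hM hM1
  have hLNinf : {x | x ∈ LN}.Infinite := hinfU N hN hN1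
  -- the interval G m = Icc a b
  obtain ⟨-, a, b, hGm⟩ := hInt m hm1
  have hab : a ≤ b := by
    have := hGne m hm1
    rw [hGm] at this
    exact Finset.nonempty_Icc.mp this
  have haG : a ∈ G m := by rw [hGm]; exact Finset.mem_Icc.mpr ⟨le_rfl, hab⟩
  have hbG : b ∈ G m := by rw [hGm]; exact Finset.mem_Icc.mpr ⟨hab, le_rfl⟩
  have ha1 : 1 ≤ a := hpos m hm1 a (Finset.mem_union_right _ haG)
  set g : ℕ := b + 1 - a with hgdef
  set k1 : ℕ := (∑ n ∈ (Finset.Ico 1 m).filter (· ∈ M), ((F n).card + (G n).card))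
    + (F m).card with hk1
  -- counting elements of LM below x for x ∈ [a, b]
  have hcount : ∀ x, a ≤ x → x ≤ b → Nat.count (· ∈ LM) x = k1 + (x - a) := by
    intro x hax hxb
    rw [Nat.count_eq_card_filter_range]
    have hsplit : (Finset.range x).filter (· ∈ LM) =
        (((Finset.Ico 1 m).filter (· ∈ M)).biUnion (fun n => F n ∪ G n) ∪ F m)
          ∪ Finset.Ico a x := by
      ext y
      constructor
      · intro hy
        rw [Finset.mem_filter, Finset.mem_range] at hy
        obtain ⟨hyx, hyL⟩ := hy
        obtain ⟨n, hnM, hyn⟩ := (hmemLM y).mp hyL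
        have hn1 : 1 ≤ n := hM1 n hnM
        rcases lt_trichotomy n m with h | h | h
        · exact Finset.mem_union_left _ (Finset.mem_union_left _ (Finset.mem_biUnion.mpr
            ⟨n, Finset.mem_filter.mpr ⟨Finset.mem_Ico.mpr ⟨hn1, h⟩, hnM⟩, hyn⟩))
        · subst h
          rcases Finset.mem_union.mp hyn with h' | h'
          · exact Finset.mem_union_left _ (Finset.mem_union_right _ h')
          · rw [hGm, Finset.mem_Icc] at h'
            exact Finset.mem_union_right _ (Finset.mem_Ico.mpr ⟨h'.1, hyx⟩)
        · exfalso
          have := hJlt m n hm1 h x (Finset.mem_union_right _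
            (by rw [hGm]; exact Finset.mem_Icc.mpr ⟨hax, hxb⟩)) y hyn
          omega
      · intro hy
        rw [Finset.mem_filter, Finset.mem_range]
        rcases Finset.mem_union.mp hy with hy' | hy'
        · rcases Finset.mem_union.mp hy' with hy'' | hy''
          · obtain ⟨n, hn, hyn⟩ := Finset.mem_biUnion.mp hy''
            rw [Finset.mem_filter, Finset.mem_Ico] at hn
            have hlt := hJlt n m hn.1.1 hn.1.2 y hyn a (Finset.mem_union_right _ haG)
            exact ⟨by omega, (hmemLM y).mpr ⟨n, hn.2, hyn⟩⟩
          · have hlt := hFG m hm1 y hy'' a haG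
            exact ⟨by omega, (hmemLM y).mpr ⟨m, hmM, Finset.mem_union_left _ hy''⟩⟩
        · rw [Finset.mem_Ico] at hy'
          refine ⟨hy'.2, (hmemLM y).mpr ⟨m, hmM, Finset.mem_union_right _ ?_⟩⟩
          rw [hGm, Finset.mem_Icc]
          omega
    rw [hsplit]
    have hdisj1 : Disjoint (((Finset.Ico 1 m).filter (· ∈ M)).biUnion (fun n => F n ∪ G n))
        (F m) := by
      rw [Finset.disjoint_left]
      intro y hy1 hy2
      obtain ⟨n, hn, hyn⟩ := Finset.mem_biUnion.mp hy1
      rw [Finset.mem_filter, Finset.mem_Ico] at hn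
      exact absurd (hJlt n m hn.1.1 hn.1.2 y hyn y (Finset.mem_union_left _ hy2))
        (lt_irrefl y)
    have hdisj2 : Disjoint ((((Finset.Ico 1 m).filter (· ∈ M)).biUnion
        (fun n => F n ∪ G n)) ∪ F m) (Finset.Ico a x) := by
      rw [Finset.disjoint_left]
      intro y hy1 hy2
      rw [Finset.mem_Ico] at hy2
      have hyG : y ∈ G m := by rw [hGm, Finset.mem_Icc]; omega
      rcases Finset.mem_union.mp hy1 with hy' | hy'
      · obtain ⟨n, hn, hyn⟩ := Finset.mem_biUnion.mp hy'
        rw [Finset.mem_filter, Finset.mem_Ico] at hn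
        exact absurd (hJlt n m hn.1.1 hn.1.2 y hyn y (Finset.mem_union_right _ hyG))
          (lt_irrefl y)
      · exact absurd (hFG m hm1 y hy' y hyG) (lt_irrefl y)
    have hdisjB : ∀ n₁ ∈ (Finset.Ico 1 m).filter (· ∈ M),
        ∀ n₂ ∈ (Finset.Ico 1 m).filter (· ∈ M), n₁ ≠ n₂ →
        Disjoint (F n₁ ∪ G n₁) (F n₂ ∪ G n₂) := by
      intro n₁ hn₁ n₂ hn₂ hne
      rw [Finset.mem_filter, Finset.mem_Ico] at hn₁ hn₂
      rw [Finset.disjoint_left]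
      intro y hy1 hy2
      rcases Nat.lt_or_ge n₁ n₂ with h | h
      · exact absurd (hJlt n₁ n₂ hn₁.1.1 h y hy1 y hy2) (lt_irrefl y)
      · have h' : n₂ < n₁ := by omega
        exact absurd (hJlt n₂ n₁ hn₂.1.1 h' y hy2 y hy1) (lt_irrefl y)
    rw [Finset.card_union_of_disjoint hdisj2, Finset.card_union_of_disjoint hdisj1,
      Finset.card_biUnion hdisjB, Nat.card_Ico]
    have hsumeq : ∑ n ∈ (Finset.Ico 1 m).filter (· ∈ M), (F n ∪ G n).card
        = ∑ n ∈ (Finset.Ico 1 m).filter (· ∈ M), ((F n).card + (G n).card) := by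
      apply Finset.sum_congr rfl
      intro n hn
      rw [Finset.mem_filter, Finset.mem_Ico] at hn
      apply Finset.card_union_of_disjoint
      rw [Finset.disjoint_left]
      intro y hy1 hy2
      exact absurd (hFG n hn.1.1 y hy1 y hy2) (lt_irrefl y)
    rw [hsumeq, hk1]
  -- the enumeration of LM on [k1, k1 + g) gives exactly G m
  have henum : ∀ i, i < g → enumSet LM (k1 + i) = a + i := by
    intro i hi
    have hmem : ((· ∈ LM) (a + i)) := by
      refine (hmemLM (a+i)).mpr ⟨m, hmM, Finset.mem_union_right _ ?_⟩
      rw [hGm, Finset.mem_Icc]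
      omega
    have hc : Nat.count (· ∈ LM) (a + i) = k1 + i := by
      rw [hcount (a+i) (by omega) (by omega)]
      omega
    have := Nat.nth_count hmem
    rw [hc] at this
    exact this
  set J : Finset ℕ := (Finset.range g).image (k1 + ·) with hJdef
  have hJimage : subImage LM J = G m := by
    rw [hGm]
    ext y
    constructor
    · intro hy
      obtain ⟨k, hkJ, hky⟩ := Finset.mem_image.mp hy
      obtain ⟨i, hi, hik⟩ := Finset.mem_image.mp hkJ
      rw [Finset.mem_range] at hi
      subst hik
      rw [henum i hi] at hky
      rw [Finset.mem_Icc]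
      omega
    · intro hy
      rw [Finset.mem_Icc] at hy
      refine Finset.mem_image.mpr ⟨k1 + (y - a), Finset.mem_image.mpr
        ⟨y - a, Finset.mem_range.mpr (by omega), rfl⟩, ?_⟩
      rw [henum (y - a) (by omega)]
      omega
  -- counting elements of LN below b + 1
  have hcountN : Nat.count (· ∈ LN) (b+1) ≤ k1 := by
    rw [Nat.count_eq_card_filter_range]
    have hsub : (Finset.range (b+1)).filter (· ∈ LN) ⊆
        ((Finset.Ico 1 m).filter (· ∈ N)).biUnion (fun n => F n ∪ G n) := by
      intro y hy
      rw [Finset.mem_filter, Finset.mem_range] at hy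
      obtain ⟨n, hnN, hyn⟩ := (hmemLN y).mp hy.2
      have hn1 := hN1 n hnN
      rcases lt_trichotomy n m with h | h | h
      · exact Finset.mem_biUnion.mpr ⟨n, Finset.mem_filter.mpr
          ⟨Finset.mem_Ico.mpr ⟨hn1, h⟩, hnN⟩, hyn⟩
      · exact absurd (h ▸ hnN) hmN
      · exfalso
        have := hJlt m n hm1 h b (Finset.mem_union_right _ hbG) y hyn
        omega
    have hsum : ∑ n ∈ Finset.Ico 1 m, (F n ∪ G n).card ≤ (F m).card := by
      rcases eq_or_lt_of_le hm1 with h1 | h2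
      · rw [← h1]
        simp
      · rw [hcard m h2]
        exact Finset.sum_le_sum (fun n _ => Finset.card_union_le _ _)
    calc ((Finset.range (b+1)).filter (· ∈ LN)).card
        ≤ (((Finset.Ico 1 m).filter (· ∈ N)).biUnion (fun n => F n ∪ G n)).card :=
          Finset.card_le_card hsub
      _ ≤ ∑ n ∈ (Finset.Ico 1 m).filter (· ∈ N), (F n ∪ G n).card := Finset.card_biUnion_le
      _ ≤ ∑ n ∈ Finset.Ico 1 m, (F n ∪ G n).card :=
          Finset.sum_le_sum_of_subset (Finset.filter_subset _ _)
      _ ≤ (F m).card := hsum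
      _ ≤ k1 := by omega
  -- elements of subImage LN J are all large
  have hminN : ∀ y ∈ subImage LN J, b + 1 ≤ y := by
    intro y hy
    obtain ⟨k, hkJ, hky⟩ := Finset.mem_image.mp hy
    obtain ⟨i, hi, hik⟩ := Finset.mem_image.mp hkJ
    subst hik
    have h1 : b + 1 ≤ Nat.nth (· ∈ LN) k1 := (Nat.count_le_iff_le_nth hLNinf).mp hcountN
    have h2 : Nat.nth (· ∈ LN) k1 ≤ Nat.nth (· ∈ LN) (k1 + i) :=
      Nat.nth_monotone hLNinf (by omega)
    have : enumSet LN (k1 + i) = Nat.nth (· ∈ LN) (k1 + i) := rfl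
    omega
  -- subImage LN J is a Schreier set
  have hSch : IsSchreier (subImage LN J) := by
    intro hne
    have hcardle : (subImage LN J).card ≤ g := by
      calc (subImage LN J).card ≤ J.card := Finset.card_image_le
        _ ≤ (Finset.range g).card := Finset.card_image_le
        _ = g := Finset.card_range g
    have hminge : b + 1 ≤ (subImage LN J).min' hne := hminN _ (Finset.min'_mem _ _)
    omega
  -- conclude
  have htau : m ≤ tau1 (subImage LM J) := by
    obtain ⟨H, h1, h2, h3⟩ := hGmax m hm1
    exact le_tau1_of_maxSchreier h1 h2 (hJimage.trans h3)
  have hfinal : (m : ℕ∞) ≤ (tau1 (subImage LM J) : ℕ∞) := by exact_mod_cast htau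
  have hmemS : J ∈ {J' : Finset ℕ | IsSchreier (subImage LN J')} := hSch
  refine le_trans hfinal ?_
  show (tau1 (subImage LM J) : ℕ∞) ≤
    ⨆ J' ∈ {J' : Finset ℕ | IsSchreier (subImage LN J')}, (tau1 (subImage LM J') : ℕ∞)
  exact le_iSup₂ (f := fun (J' : Finset ℕ)
    (_ : J' ∈ {J' : Finset ℕ | IsSchreier (subImage LN J')}) =>
    ((tau1 (subImage LM J') : ℕ∞))) J hmemS
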